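/- Let a be a positive integer and b, d be nonzero integers with b ≠ d. Suppose p is a prime such that v_p(a) > max{v_p(b), v_p(d)} and v_p(b) = v_p(d). Then there exist a completely multiplicative unimodular function f, a real ε > 0, and a positive integer N such that for every n ≥ N one has a n + b ≥ 1, a n + d ≥ 1, and |f(a n + b) − f(a n + d)| ≥ ε; in particular liminf_{n→∞} |f(a n + b) − f(a n + d)| > 0. -/

import Mathlib

open MeasureTheory Filter


lemma isUnit_intCast_zmod (p : ℕ) (hp : p.Prime) (s : ℕ) {e : ℤ} (he : ¬ (p : ℤ) ∣ e) :
    IsUnit ((e : ZMod (p ^ s))) := by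
  haveI : NeZero (p ^ s) := ⟨pow_ne_zero _ hp.ne_zero⟩
  have hnd : ¬ p ∣ e.natAbs := fun h => he (Int.natCast_dvd.mpr h)
  have hcop : Nat.Coprime (e.natAbs) (p ^ s) :=
    Nat.Coprime.pow_right _ ((hp.coprime_iff_not_dvd.mpr hnd).symm)
  have hu : IsUnit ((e.natAbs : ZMod (p ^ s))) := (ZMod.isUnit_iff_coprime _ _).mpr hcop
  rcases Int.natAbs_eq e with h | h
  · rw [h, Int.cast_natCast]; exact hu
  · rw [h, Int.cast_neg, Int.cast_natCast]; exact hu.neg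

lemma ordCompl_pow_mul (p : ℕ) (hp : p.Prime) (k : ℕ) {t : ℕ} (h : ¬ p ∣ t) :
    ordCompl[p] (p ^ k * t) = t := by
  rw [Nat.ordCompl_mul]
  have h1 : ordCompl[p] (p ^ k) = 1 := by
    rw [hp.factorization_pow, Finsupp.single_eq_same, Nat.div_self (pow_pos hp.pos k)]
  have h2 : ordCompl[p] t = t := by
    rw [Nat.factorization_eq_zero_of_not_dvd h, pow_zero, Nat.div_one]
  rw [h1, h2, one_mul]

lemma exists_good_char (p : ℕ) (hp : p.Prime) (s : ℕ) (hs : 1 ≤ s) :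
    ∃ χ : MulChar (ZMod (p ^ s)) ℂ,
      ∀ x y : ZMod (p ^ s), IsUnit x → IsUnit y →
        (∃ e : ℤ, ¬ (p : ℤ) ∣ e ∧ x - y = (e : ZMod (p ^ s)) * (p : ZMod (p ^ s)) ^ (s - 1)) →
        χ x ≠ χ y := by
  haveI : NeZero (p ^ s) := ⟨pow_ne_zero _ hp.ne_zero⟩
  haveI := Fact.mk hp
  rcases Nat.lt_or_ge s 2 with hs2 | hs2
  -- case s = 1
  · have hs1 : s = 1 := by omega
    subst hs1
    haveI : Fact (Nat.Prime (p ^ 1)) := ⟨by simpa using hp⟩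
    obtain ⟨g, hg⟩ := IsCyclic.exists_generator (α := (ZMod (p ^ 1))ˣ)
    set n0 := orderOf g with hn0def
    have hn0 : n0 ≠ 0 := (orderOf_pos g).ne'
    have hζ := Complex.isPrimitiveRoot_exp n0 hn0
    set ζ := Complex.exp (2 * Real.pi * Complex.I / n0)
    have hζunit : IsUnit ζ := hζ.isUnit hn0
    set u := hζunit.unit with hudef
    have hcoe : (u : ℂ) = ζ := hζunit.unit_spec
    have hζu : IsPrimitiveRoot u n0 := by
      rw [← IsPrimitiveRoot.coe_units_iff, hcoe]; exact hζ
    have hordu : orderOf u = n0 := hζu.eq_orderOf.symm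
    have hdvd : orderOf u ∣ orderOf g := by rw [hordu]
    set φ := monoidHomOfForallMemZpowers hg hdvd with hφdef
    have hsep : ∀ z : (ZMod (p ^ 1))ˣ, φ z = 1 → z = 1 := by
      intro z hz
      obtain ⟨j, rfl⟩ := hg z
      rw [map_zpow, monoidHomOfForallMemZpowers_apply_gen] at hz
      have : (orderOf u : ℤ) ∣ j := orderOf_dvd_iff_zpow_eq_one.mpr hz
      rw [hordu, hn0def] at this
      exact orderOf_dvd_iff_zpow_eq_one.mp this
    refine ⟨MulChar.ofUnitHom φ, fun x y hx hy ⟨e, hpe, hxy⟩ hcontra => ?_⟩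
    have hne : x ≠ y := by
      have hu : IsUnit ((e : ZMod (p ^ 1))) := isUnit_intCast_zmod p hp 1 hpe
      have : x - y ≠ 0 := by
        rw [hxy]
        simpa using hu.ne_zero
      exact sub_ne_zero.mp this
    obtain ⟨ux, rfl⟩ := hx
    obtain ⟨uy, rfl⟩ := hy
    rw [MulChar.ofUnitHom_coe, MulChar.ofUnitHom_coe] at hcontra
    have : φ ux = φ uy := Units.ext hcontra
    have h1 : φ (ux * uy⁻¹) = 1 := by
      rw [map_mul, map_inv, this, mul_inv_cancel]
    have := hsep _ h1
    rw [mul_inv_eq_one] at this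
    exact hne (by rw [this])
  -- case s ≥ 2
  · set q := p ^ s with hqdef
    set π : ZMod q := (p : ZMod q) ^ (s - 1) with hπdef
    have hππ : π * π = 0 := by
      have : π * π = ((p ^ (s - 1) * p ^ (s - 1) : ℕ) : ZMod q) := by push_cast; ring
      rw [this, ZMod.natCast_eq_zero_iff, ← pow_add]
      exact pow_dvd_pow p (by omega)
    have hπ0 : π ≠ 0 := by
      intro h
      rw [hπdef, show ((p : ZMod q) ^ (s-1) = ((p ^ (s-1) : ℕ) : ZMod q)) by push_cast; ring,
        ZMod.natCast_eq_zero_iff] at h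
      have := (Nat.pow_dvd_pow_iff_le_right hp.one_lt).mp h
      omega
    have hz0 : (1 : ZMod q) + π ≠ 1 := by
      intro h
      exact hπ0 (by linear_combination h)
    haveI : Finite (ZMod q) := inferInstance
    haveI : NeZero ((Monoid.exponent (ZMod q)ˣ : ℕ) : ℂ) :=
      ⟨Nat.cast_ne_zero.mpr Monoid.exponent_ne_zero_of_finite⟩
    obtain ⟨χ, hχ⟩ := MulChar.exists_apply_ne_one_of_hasEnoughRootsOfUnity (ZMod q) ℂ
      (show (1 : ZMod q) + π ≠ 1 from hz0)
    have hpow : ∀ t : ℕ, ((1 : ZMod q) + π) ^ t = 1 + (t : ZMod q) * π := by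
      intro t
      induction t with
      | zero => simp
      | succ t ih =>
        rw [pow_succ, ih]
        push_cast
        linear_combination (t : ZMod q) * hππ
    have hz0p : ((1 : ZMod q) + π) ^ p = 1 := by
      rw [hpow, hπdef, ← pow_succ']
      have : (p : ZMod q) ^ (s - 1 + 1) = ((p ^ s : ℕ) : ZMod q) := by
        push_cast
        rw [show s - 1 + 1 = s by omega]
      rw [this, hqdef, ZMod.natCast_self, add_zero]
    have hord : orderOf (χ ((1 : ZMod q) + π)) = p :=
      orderOf_eq_prime (by rw [← map_pow, hz0p, map_one]) hχ
    have hkey : ∀ t : ℕ, ¬ p ∣ t → χ (1 + (t : ZMod q) * π) ≠ 1 := by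
      intro t ht hcon
      rw [← hpow, map_pow] at hcon
      have := orderOf_dvd_of_pow_eq_one hcon
      rw [hord] at this
      exact ht this
    refine ⟨χ, fun x y hx hy ⟨e, hpe, hxy⟩ hcontra => ?_⟩
    have hue : IsUnit ((e : ZMod q)) := isUnit_intCast_zmod p hp s hpe
    obtain ⟨v, hv⟩ := hy
    set w := hue.unit * v⁻¹ with hwdef
    have hwcoe : (w : ZMod q) = (e : ZMod q) * ((v⁻¹ : (ZMod q)ˣ) : ZMod q) := by
      rw [hwdef, Units.val_mul, IsUnit.unit_spec]
    set t := ZMod.val ((w : ZMod q)) with htdef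
    have htcast : ((t : ℕ) : ZMod q) = (w : ZMod q) := by
      rw [htdef, ZMod.natCast_val, ZMod.cast_id]
    have hpt : ¬ p ∣ t := by
      intro hdvd
      have hcop := ZMod.val_coe_unit_coprime w
      have hpq : p ∣ q := dvd_pow_self p (by omega : s ≠ 0)
      have : p ∣ Nat.gcd t q := Nat.dvd_gcd hdvd hpq
      rw [hcop] at this
      exact hp.one_lt.ne' (Nat.dvd_one.mp this)
    have hx_eq : x = y * (1 + (t : ℕ) * π) := by
      rw [htcast, hwcoe]
      have hvv : y * ((v⁻¹ : (ZMod q)ˣ) : ZMod q) = 1 := by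
        rw [← hv, ← Units.val_mul, mul_inv_cancel, Units.val_one]
      have hxy' : x = y + (e : ZMod q) * π := by linear_combination hxy
      rw [hxy']
      linear_combination (-((e : ZMod q) * π)) * hvv
    have hχy : χ y ≠ 0 := by
      have : IsUnit (χ y) := by
        have := IsUnit.map χ.toMonoidHom (⟨v, hv⟩ : IsUnit y)
        simpa using this
      exact this.ne_zero
    apply hkey t hpt
    have : χ x = χ y * χ (1 + (t : ℕ) * π) := by rw [hx_eq, map_mul]
    rw [hcontra] at this
    exact (mul_left_cancel₀ hχy (show χ y * 1 = χ y * χ (1 + (t : ℕ) * π) by rw [mul_one]; exact this)).symm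

/-- `f` is completely multiplicative and unimodular on the positive integers. -/
def CompMultUnimodular (f : ℕ → ℂ) : Prop :=
  (∀ n : ℕ, 1 ≤ n → ‖f n‖ = 1) ∧
  (∀ m n : ℕ, 1 ≤ m → 1 ≤ n → f (m * n) = f m * f n)

theorem separation_of_equal_valuation
    (a : ℕ) (ha : 0 < a) (b d : ℤ) (hb : b ≠ 0) (hd : d ≠ 0) (hbd : b ≠ d)
    (p : ℕ) (hp : p.Prime)
    (hval : max (padicValInt p b) (padicValInt p d) < padicValInt p (a : ℤ))
    (heq : padicValInt p b = padicValInt p d) :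
    ∃ f : ℕ → ℂ, CompMultUnimodular f ∧ ∃ ε : ℝ, 0 < ε ∧ ∃ N : ℕ, 0 < N ∧
      ∀ n : ℕ, N ≤ n → 1 ≤ (a : ℤ) * n + b ∧ 1 ≤ (a : ℤ) * n + d ∧
        ε ≤ ‖f (((a : ℤ) * n + b).toNat) - f (((a : ℤ) * n + d).toNat)‖ := by
  haveI := Fact.mk hp
  have hp0 : (p : ℤ) ≠ 0 := Int.natCast_ne_zero.mpr hp.ne_zero
  set k := padicValInt p b with hkdef
  set m := padicValInt p (b - d) with hmdef
  have hbd0 : b - d ≠ 0 := sub_ne_zero.mpr hbd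
  have hpkb : (p : ℤ) ^ k ∣ b := padicValInt_dvd b
  have hpkd : (p : ℤ) ^ k ∣ d := by rw [heq]; exact padicValInt_dvd d
  have hkm : k ≤ m := by
    have h1 : (p : ℤ) ^ k ∣ b - d := dvd_sub hpkb hpkd
    rcases (padicValInt_dvd_iff k (b - d)).mp h1 with h | h
    · exact absurd h hbd0
    · exact h
  have hkv : k < padicValInt p (a : ℤ) := by
    rw [← heq, max_self] at hval
    exact hval
  have hpa : (p : ℤ) ^ (k + 1) ∣ (a : ℤ) := (padicValInt_dvd_iff _ _).mpr (Or.inr hkv)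
  obtain ⟨a₀, ha₀⟩ := hpa
  obtain ⟨b', hb'⟩ := hpkb
  obtain ⟨d', hd'⟩ := hpkd
  have hpb' : ¬ (p : ℤ) ∣ b' := by
    intro hdvd
    have h1 : (p : ℤ) ^ (k + 1) ∣ b := by
      rw [hb', pow_succ]; exact mul_dvd_mul_left _ hdvd
    rcases (padicValInt_dvd_iff (k + 1) b).mp h1 with h | h
    · exact hb h
    · omega
  have hpd' : ¬ (p : ℤ) ∣ d' := by
    intro hdvd
    have h1 : (p : ℤ) ^ (k + 1) ∣ d := by
      rw [hd', pow_succ]; exact mul_dvd_mul_left _ hdvd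
    rcases (padicValInt_dvd_iff (k + 1) d).mp h1 with h | h
    · exact hd h
    · omega
  obtain ⟨e, he⟩ : (p : ℤ) ^ m ∣ b - d := padicValInt_dvd (b - d)
  have hpe : ¬ (p : ℤ) ∣ e := by
    intro hdvd
    have h1 : (p : ℤ) ^ (m + 1) ∣ b - d := by
      rw [he, pow_succ]; exact mul_dvd_mul_left _ hdvd
    rcases (padicValInt_dvd_iff (m + 1) (b - d)).mp h1 with h | h
    · exact hbd0 h
    · omega
  have hb'd' : b' - d' = (p : ℤ) ^ (m - k) * e := by
    apply mul_left_cancel₀ (pow_ne_zero k hp0)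
    have : (p : ℤ) ^ k * ((p : ℤ) ^ (m - k) * e) = (p : ℤ) ^ m * e := by
      rw [← mul_assoc, ← pow_add, show k + (m - k) = m by omega]
    rw [this, ← he, hb', hd']
    ring
  set s := m - k + 1 with hsdef
  have hs1 : 1 ≤ s := by omega
  set q := p ^ s with hqdef
  haveI : NeZero q := ⟨pow_ne_zero _ hp.ne_zero⟩
  obtain ⟨χ, hχ⟩ := exists_good_char p hp s hs1
  refine ⟨fun n => χ ((ordCompl[p] n : ZMod q)), ⟨?_, ?_⟩, ?_⟩
  · -- unimodular
    intro n hn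
    have hn0 : n ≠ 0 := by omega
    have hcop : Nat.Coprime (ordCompl[p] n) q :=
      Nat.Coprime.pow_right _ ((Nat.coprime_ordCompl hp hn0).symm)
    obtain ⟨w, hw⟩ := (ZMod.isUnit_iff_coprime _ _).mpr hcop
    have hpow : (χ ((ordCompl[p] n : ZMod q))) ^ (Fintype.card (ZMod q)ˣ) = 1 := by
      rw [← map_pow, ← hw, ← Units.val_pow_eq_pow_val, pow_card_eq_one, Units.val_one, map_one]
    have := Complex.norm_eq_one_of_pow_eq_one hpow Fintype.card_ne_zero
    exact this
  · -- completely multiplicative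
    intro m' n' hm' hn'
    dsimp only
    rw [Nat.ordCompl_mul, Nat.cast_mul, map_mul]
  · -- the separation
    haveI : Nonempty (ZMod q × ZMod q) := inferInstance
    set g : ZMod q × ZMod q → ℝ :=
      fun z => if χ z.1 = χ z.2 then 1 else ‖χ z.1 - χ z.2‖ with hgdef
    refine ⟨Finset.univ.inf' Finset.univ_nonempty g, ?_, b.natAbs + d.natAbs + 1, by omega, ?_⟩
    · rw [Finset.lt_inf'_iff]
      intro i _
      rw [hgdef]
      dsimp only
      split_ifs with h
      · norm_num
      · exact norm_pos_iff.mpr (sub_ne_zero.mpr h)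
    intro n hn
    have hN : (b.natAbs : ℤ) + d.natAbs + 1 ≤ (n : ℤ) := by exact_mod_cast hn
    have han : (n : ℤ) ≤ (a : ℤ) * n := le_mul_of_one_le_left (by positivity)
      (by exact_mod_cast ha)
    have hXpos : 1 ≤ (a : ℤ) * n + b := by
      have h3 : -(b.natAbs : ℤ) ≤ b := by omega
      have h4 : (0 : ℤ) ≤ d.natAbs := Int.natCast_nonneg _
      linarith
    have hYpos : 1 ≤ (a : ℤ) * n + d := by
      have h3 : -(d.natAbs : ℤ) ≤ d := by omega
      have h4 : (0 : ℤ) ≤ b.natAbs := Int.natCast_nonneg _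
      linarith
    refine ⟨hXpos, hYpos, ?_⟩
    set x : ℤ := (p : ℤ) * (a₀ * n) + b' with hxdef
    set y : ℤ := (p : ℤ) * (a₀ * n) + d' with hydef
    have hXx : (a : ℤ) * n + b = (p : ℤ) ^ k * x := by
      rw [hxdef, ha₀, hb']; ring
    have hYy : (a : ℤ) * n + d = (p : ℤ) ^ k * y := by
      rw [hydef, ha₀, hd']; ring
    have hpkpos : (0 : ℤ) < (p : ℤ) ^ k := by positivity
    have hpx : ¬ (p : ℤ) ∣ x := by
      intro h
      exact hpb' ((dvd_add_right (Dvd.intro _ rfl)).mp h)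
    have hpy : ¬ (p : ℤ) ∣ y := by
      intro h
      exact hpd' ((dvd_add_right (Dvd.intro _ rfl)).mp h)
    have hxpos : 0 < x := by
      by_contra hcon
      push_neg at hcon
      have := mul_nonpos_of_nonneg_of_nonpos hpkpos.le hcon
      rw [← hXx] at this
      linarith
    have hypos : 0 < y := by
      by_contra hcon
      push_neg at hcon
      have := mul_nonpos_of_nonneg_of_nonpos hpkpos.le hcon
      rw [← hYy] at this
      linarith
    set xn := x.toNat with hxndef
    set yn := y.toNat with hyndef
    have hxn : (xn : ℤ) = x := Int.toNat_of_nonneg hxpos.le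
    have hyn : (yn : ℤ) = y := Int.toNat_of_nonneg hypos.le
    have hXtoNat : ((a : ℤ) * n + b).toNat = p ^ k * xn := by
      rw [hXx, ← hxn, show ((p : ℤ) ^ k * (xn : ℤ) = ((p ^ k * xn : ℕ) : ℤ)) by push_cast; ring,
        Int.toNat_natCast]
    have hYtoNat : ((a : ℤ) * n + d).toNat = p ^ k * yn := by
      rw [hYy, ← hyn, show ((p : ℤ) ^ k * (yn : ℤ) = ((p ^ k * yn : ℕ) : ℤ)) by push_cast; ring,
        Int.toNat_natCast]
    have hpxn : ¬ p ∣ xn := by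
      intro h
      exact hpx (by rw [← hxn]; exact_mod_cast Int.natCast_dvd_natCast.mpr h)
    have hpyn : ¬ p ∣ yn := by
      intro h
      exact hpy (by rw [← hyn]; exact_mod_cast Int.natCast_dvd_natCast.mpr h)
    have hfX : χ ((ordCompl[p] (((a : ℤ) * n + b).toNat) : ZMod q)) = χ ((xn : ZMod q)) := by
      rw [hXtoNat, ordCompl_pow_mul p hp k hpxn]
    have hfY : χ ((ordCompl[p] (((a : ℤ) * n + d).toNat) : ZMod q)) = χ ((yn : ZMod q)) := by
      rw [hYtoNat, ordCompl_pow_mul p hp k hpyn]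
    have hux : IsUnit ((xn : ZMod q)) := (ZMod.isUnit_iff_coprime _ _).mpr
      (Nat.Coprime.pow_right _ ((hp.coprime_iff_not_dvd.mpr hpxn).symm))
    have huy : IsUnit ((yn : ZMod q)) := (ZMod.isUnit_iff_coprime _ _).mpr
      (Nat.Coprime.pow_right _ ((hp.coprime_iff_not_dvd.mpr hpyn).symm))
    have hdiff : (xn : ZMod q) - (yn : ZMod q)
        = (e : ZMod q) * (p : ZMod q) ^ (s - 1) := by
      have h1 : x - y = (p : ℤ) ^ (s - 1) * e := by
        rw [hxdef, hydef, show x - y = b' - d' by ring, hb'd',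
          show s - 1 = m - k by omega]
      have h2 : ((xn : ZMod q)) - ((yn : ZMod q)) = ((((xn : ℤ) - (yn : ℤ) : ℤ)) : ZMod q) := by
        push_cast; ring
      rw [h2, hxn, hyn, h1]
      push_cast
      ring
    have hne := hχ _ _ hux huy ⟨e, hpe, hdiff⟩
    have hbound := Finset.inf'_le g (Finset.mem_univ ((xn : ZMod q), (yn : ZMod q)))
    rw [hgdef] at hbound
    dsimp only at hbound
    rw [if_neg hne] at hbound
    dsimp only
    rw [hfX, hfY]
    exact hbound
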